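/- Every element of the biHecke monoid preserves Bruhat order: if f is any composition of the operators π_i and π̄_i on a finite Coxeter group W, then u ≤_B v implies u·f ≤_B v·f. -/

import Mathlib

open scoped Classical

noncomputable section

variable {B W : Type*} [Group W] {M : CoxeterMatrix B}

/-- The elementary bubble antisorting operator `π_i` on a Coxeter group:
`w·π_i = w` if `i` is a right descent of `w`, and `w·π_i = w s_i` otherwise. -/
noncomputable def piOp (cs : CoxeterSystem M W) (i : B) : W → W :=
  fun w => if cs.IsRightDescent w i then w else w * cs.simple i

/-- The elementary bubble sorting operator `π̄_i` on a Coxeter group: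
`w·π̄_i = w s_i` if `i` is a right descent of `w`, and `w·π̄_i = w` otherwise. -/
noncomputable def pibOp (cs : CoxeterSystem M W) (i : B) : W → W :=
  fun w => if cs.IsRightDescent w i then w * cs.simple i else w

/-- The biHecke monoid: the submonoid of `Function.End W` generated by the antisorting
operators `π_i` and the sorting operators `π̄_i`. -/
noncomputable def biHecke (cs : CoxeterSystem M W) : Submonoid (Function.End W) :=
  Submonoid.closure ({f | ∃ i, f = piOp cs i} ∪ {f | ∃ i, f = pibOp cs i})

/-- Left weak order: `u ≤_L v` iff `ℓ(v u⁻¹) + ℓ(u) = ℓ(v)`. -/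
noncomputable def leL (cs : CoxeterSystem M W) (u v : W) : Prop :=
  cs.length (v * u⁻¹) + cs.length u = cs.length v

/-- Right weak order: `u ≤_R v` iff `ℓ(u) + ℓ(u⁻¹ v) = ℓ(v)`. -/
noncomputable def leR (cs : CoxeterSystem M W) (u v : W) : Prop :=
  cs.length u + cs.length (u⁻¹ * v) = cs.length v

/-- Bruhat order: `u ≤_B v` iff some reduced word of `v` has a subword with product `u`. -/
noncomputable def leB (cs : CoxeterSystem M W) (u v : W) : Prop :=
  ∃ l : List B, cs.IsReduced l ∧ cs.wordProd l = v ∧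
    ∃ l' : List B, l'.Sublist l ∧ cs.wordProd l' = u

/-- Right action of a word of operators: apply the operators from left to right. -/
noncomputable def actWord (ops : B → W → W) (l : List B) (w : W) : W :=
  l.foldl (fun x i => ops i x) w

/-- The function `e_w = π_{w⁻¹ w₀} π̄_{w₀ w}` (given reduced words `l1` for `w⁻¹ w₀` and
`l2` for `w₀ w`), acting on the right. -/
noncomputable def eIdem (cs : CoxeterSystem M W) (l1 l2 : List B) : W → W :=
  fun x => actWord (pibOp cs) l2 (actWord (piOp cs) l1 x)

/-- The parabolic subgroup `W_K`. -/
noncomputable def parab (cs : CoxeterSystem M W) (K : Set B) : Subgroup W :=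
  Subgroup.closure (cs.simple '' K)

/-- `K` is a right block of `w` if `w W_K = W_J w` for some `J`. -/
noncomputable def isRightBlock (cs : CoxeterSystem M W) (w : W) (K : Set B) : Prop :=
  ∃ J : Set B, (fun x => w * x) '' (parab cs K : Set W) = (fun x => x * w) '' (parab cs J : Set W)

/-- `J` is a left block of `w` if `w W_K = W_J w` for some `K`. -/
noncomputable def isLeftBlock (cs : CoxeterSystem M W) (w : W) (J : Set B) : Prop :=
  ∃ K : Set B, (fun x => w * x) '' (parab cs K : Set W) = (fun x => x * w) '' (parab cs J : Set W)

/-- The cutting relation: `v ⊑ w` iff `v = w^K` for some right block `K` of `w`, i.e.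
`w = v · u` with `u ∈ W_K` and `v` has no right descents in `K`. -/
noncomputable def cuts (cs : CoxeterSystem M W) (v w : W) : Prop :=
  ∃ K J : Set B,
    ((fun x => w * x) '' (parab cs K : Set W) = (fun x => x * w) '' (parab cs J : Set W)) ∧
    ∃ u ∈ parab cs K, w = v * u ∧ ∀ k ∈ K, ¬ cs.IsRightDescent v k

/-- Covering relation of left weak order. -/
noncomputable def covL (cs : CoxeterSystem M W) (x y : W) : Prop :=
  leL cs x y ∧ x ≠ y ∧ ∀ z, leL cs x z → leL cs z y → z = x ∨ z = y

end

namespace BHAux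

section InvolCalc

variable {G : Type*} [Group G] {x y : G}

private lemma inv_eq_self' (hx : x * x = 1) : x⁻¹ = x := by
  rw [← mul_eq_one_iff_inv_eq, hx]

private lemma conj_iff (g w v : G) : g * w * g⁻¹ = v ↔ w = g⁻¹ * v * g := by
  constructor
  · intro h; rw [← h]; group
  · intro h; rw [h]; group

private lemma conj_invol (hx : x * x = 1) (w : G) : x * (x * w * x) * x = w := by
  have : x * (x * w * x) * x = (x * x) * w * (x * x) := by simp only [mul_assoc]
  rw [this, hx, one_mul, mul_one]

private lemma conj_iff' (hy : y * y = 1) (A v : G) : y * A * y = v ↔ A = y * v * y := by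
  constructor
  · intro h; rw [← conj_invol hy A, h]
  · intro h; rw [h, conj_invol hy]

private lemma conj_eq_iff (hx : x * x = 1) (w : G) : x * w * x = x ↔ w = x := by
  rw [conj_iff' hx]
  constructor <;> (intro h; rw [h, hx, one_mul])

private lemma yxy_rel (hx : x * x = 1) (hy : y * y = 1) : y * (x * y) = (x * y)⁻¹ * y := by
  rw [mul_inv_rev, inv_eq_self' hx, inv_eq_self' hy]
  simp only [mul_assoc]

private lemma L1 (hx : x * x = 1) (hy : y * y = 1) (k : ℕ) :
    y * (x * y) ^ k = ((x * y) ^ k)⁻¹ * y := by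
  induction k with
  | zero => simp
  | succ k ih =>
    have hcom : (x*y)⁻¹ * ((x*y) ^ k)⁻¹ = ((x*y) ^ k)⁻¹ * (x*y)⁻¹ := by
      rw [← mul_inv_rev, ← mul_inv_rev, ← pow_succ, ← pow_succ']
    rw [pow_succ, ← mul_assoc, ih, mul_assoc, yxy_rel hx hy,
      mul_inv_rev ((x*y)^k) (x*y), hcom, mul_assoc]

private lemma L2 (hx : x * x = 1) (hy : y * y = 1) (k : ℕ) :
    ((x * y) ^ k)⁻¹ * y * (x * y) ^ k = ((x * y) ^ (2 * k))⁻¹ * y := by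
  rw [mul_assoc, L1 hx hy, ← mul_assoc, ← mul_inv_rev, ← pow_add,
    show k + k = 2 * k by ring]

private lemma L3 (hx : x * x = 1) (hy : y * y = 1) (k : ℕ) :
    ((x * y) ^ k)⁻¹ * (y * x * y) * (x * y) ^ k = ((x * y) ^ (2 * k + 1))⁻¹ * y := by
  have hyxy : y * x * y = y * (x * y) := by simp only [mul_assoc]
  rw [hyxy]
  calc ((x*y)^k)⁻¹ * (y * (x*y)) * (x*y)^k
      = (((x*y)^k)⁻¹ * y) * ((x*y) * (x*y)^k) := by simp only [mul_assoc]
    _ = (((x*y)^k)⁻¹ * y) * (x*y)^(k+1) := by rw [← pow_succ']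
    _ = (y * (x*y)^k) * (x*y)^(k+1) := by rw [← L1 hx hy]
    _ = y * (x*y)^(2*k+1) := by rw [mul_assoc, ← pow_add, show k + (k+1) = 2*k+1 by ring]
    _ = ((x*y)^(2*k+1))⁻¹ * y := L1 hx hy _

end InvolCalc

variable {B W : Type*} [Group W] {M : CoxeterMatrix B} (cs : CoxeterSystem M W)

local prefix:100 "s" => cs.simple
local prefix:100 "π" => cs.wordProd
local prefix:100 "ℓ" => cs.length

/-- The sign representation on `W × ℤˣ`. -/
noncomputable def sigma (i : B) : Equiv.Perm (W × ℤˣ) where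
  toFun p := (s i * p.1 * s i, if p.1 = s i then -p.2 else p.2)
  invFun p := (s i * p.1 * s i, if p.1 = s i then -p.2 else p.2)
  left_inv p := by
    obtain ⟨w, e⟩ := p
    by_cases h : w = s i
    · subst h; simp [cs.simple_mul_simple_self]
    · simp only [conj_eq_iff (cs.simple_mul_simple_self i), h, if_neg,
        conj_invol (cs.simple_mul_simple_self i)]
      simp
  right_inv p := by
    obtain ⟨w, e⟩ := p
    by_cases h : w = s i
    · subst h; simp [cs.simple_mul_simple_self]
    · simp only [conj_eq_iff (cs.simple_mul_simple_self i), h, if_neg,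
        conj_invol (cs.simple_mul_simple_self i)]
      simp

lemma sigma_apply (i : B) (p : W × ℤˣ) :
    sigma cs i p = (s i * p.1 * s i, if p.1 = s i then -p.2 else p.2) := rfl

private lemma sigma_mul_pow (i j : B) (k : ℕ) (p : W × ℤˣ) :
    ((sigma cs i * sigma cs j) ^ k) p =
      ((s i * s j) ^ k * p.1 * ((s i * s j) ^ k)⁻¹,
        (∏ e ∈ Finset.range (2 * k),
          (if p.1 = ((s i * s j) ^ e)⁻¹ * s j then (-1 : ℤˣ) else 1)) * p.2) := by
  have hx := cs.simple_mul_simple_self i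
  have hy := cs.simple_mul_simple_self j
  induction k with
  | zero => simp
  | succ k ih =>
    rw [pow_succ', Equiv.Perm.mul_apply, ih, Equiv.Perm.mul_apply]
    simp only [sigma_apply]
    obtain ⟨w, e⟩ := p
    simp only
    have hc1 : ((s i * s j) ^ k * w * ((s i * s j) ^ k)⁻¹ = s j)
        ↔ (w = ((s i * s j) ^ (2 * k))⁻¹ * s j) := by
      rw [conj_iff ((s i * s j) ^ k) w (s j), L2 hx hy]
    have hc2 : (s j * ((s i * s j) ^ k * w * ((s i * s j) ^ k)⁻¹) * s j = s i)
        ↔ (w = ((s i * s j) ^ (2 * k + 1))⁻¹ * s j) := by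
      rw [conj_iff' hy, conj_iff ((s i * s j) ^ k) w, L3 hx hy]
    rw [Prod.mk.injEq]
    refine ⟨?_, ?_⟩
    · rw [pow_succ' (s i * s j) k, mul_inv_rev ((s i * s j)) ((s i * s j) ^ k),
        mul_inv_rev (s i) (s j), inv_eq_self' hx, inv_eq_self' hy]
      simp only [mul_assoc]
    · simp only [hc1, hc2]
      rw [show 2 * (k + 1) = (2 * k) + 1 + 1 by ring, Finset.prod_range_succ,
        Finset.prod_range_succ]
      by_cases h1 : w = ((s i * s j) ^ (2*k))⁻¹ * s j <;>
        by_cases h2 : w = ((s i * s j) ^ (2*k+1))⁻¹ * s j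
      · rw [if_pos h1, if_pos h2, if_pos h1, if_pos h2]
        simp [mul_comm, mul_left_comm, mul_assoc]
      · rw [if_pos h1, if_neg h2, if_pos h1, if_neg h2]
        simp [mul_comm, mul_left_comm, mul_assoc]
      · rw [if_neg h1, if_pos h2, if_neg h1, if_pos h2]
        simp [mul_comm, mul_left_comm, mul_assoc]
      · rw [if_neg h1, if_neg h2, if_neg h1, if_neg h2]
        simp [mul_comm, mul_left_comm, mul_assoc]

/-- The sigma maps are liftable. -/
lemma sigma_liftable : M.IsLiftable (sigma cs) := by
  intro i j
  by_cases hM : M i j = 0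
  · rw [hM, pow_zero]
  · ext p
    · rw [sigma_mul_pow cs i j (M i j) p, cs.simple_mul_simple_pow i j]
      simp
    · rw [sigma_mul_pow cs i j (M i j) p]
      have hper : ∀ e, (if p.1 = ((s i * s j) ^ (M i j + e))⁻¹ * s j then (-1:ℤˣ) else 1)
          = (if p.1 = ((s i * s j) ^ e)⁻¹ * s j then (-1:ℤˣ) else 1) := by
        intro e
        rw [pow_add, cs.simple_mul_simple_pow i j, one_mul]
      have : (∏ e ∈ Finset.range (2 * M i j),
          (if p.1 = ((s i * s j) ^ e)⁻¹ * s j then (-1:ℤˣ) else 1))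
          = (∏ e ∈ Finset.range (M i j),
              (if p.1 = ((s i * s j) ^ e)⁻¹ * s j then (-1:ℤˣ) else 1)) ^ 2 := by
        rw [two_mul, Finset.prod_range_add, sq]
        congr 1
        exact Finset.prod_congr rfl (fun e _ => hper e)
      rw [this]
      simp [Int.units_sq]


/-- The lifted sign representation. -/
noncomputable def phi : W →* Equiv.Perm (W × ℤˣ) := cs.lift ⟨sigma cs, sigma_liftable cs⟩

lemma phi_simple (i : B) : phi cs (s i) = sigma cs i := cs.lift_apply_simple _ i

lemma phi_wordProd (ω : List B) (t : W) (e : ℤˣ) :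
    phi cs (π ω) (t, e) =
      (π ω * t * (π ω)⁻¹, ((-1 : ℤˣ) ^ ((cs.rightInvSeq ω).count t)) * e) := by
  induction ω with
  | nil => simp [cs.wordProd_nil]
  | cons i ω ih =>
    rw [cs.wordProd_cons, map_mul, Equiv.Perm.mul_apply, ih, phi_simple, sigma_apply]
    rw [Prod.mk.injEq]
    constructor
    · simp only [mul_inv_rev, cs.inv_simple, mul_assoc]
    · show (if π ω * t * (π ω)⁻¹ = s i then _ else _) = _
      have hcond : (π ω * t * (π ω)⁻¹ = s i) ↔ (t = (π ω)⁻¹ * s i * π ω) :=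
        conj_iff (π ω) t (s i)
      have hris : cs.rightInvSeq (i :: ω) = ((π ω)⁻¹ * s i * π ω) :: cs.rightInvSeq ω := rfl
      rw [hris, List.count_cons]
      by_cases h : t = (π ω)⁻¹ * s i * π ω
      · rw [if_pos (hcond.mpr h)]
        have hb : ((π ω)⁻¹ * s i * π ω == t) = true := by
          rw [beq_iff_eq]; exact h.symm
        rw [hb]
        simp [pow_succ]
      · rw [if_neg (fun hc => h (hcond.mp hc))]
        have hb : ((π ω)⁻¹ * s i * π ω == t) = false := by
          rw [beq_eq_false_iff_ne]; exact fun hc => h hc.symm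
        rw [hb]
        simp

/-- The sign of `t` at `w`. -/
noncomputable def csign (w t : W) : ℤˣ := (phi cs w (t, 1)).2

lemma csign_eq {w : W} (ω : List B) (t : W) (h : π ω = w) :
    csign cs w t = (-1 : ℤˣ) ^ ((cs.rightInvSeq ω).count t) := by
  rw [csign, ← h, phi_wordProd, mul_one]

lemma rightInvSeq_append (α β : List B) :
    cs.rightInvSeq (α ++ β) =
      (cs.rightInvSeq α).map (fun u => (π β)⁻¹ * u * π β) ++ cs.rightInvSeq β := by
  induction α with
  | nil => simp
  | cons i α ih =>
    show ((π (α ++ β))⁻¹ * s i * π (α ++ β)) :: cs.rightInvSeq (α ++ β) = _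
    rw [ih]
    show _ = ((fun u => (π β)⁻¹ * u * π β) ((π α)⁻¹ * s i * π α)) :: _
    rw [cs.wordProd_append]
    simp [mul_assoc, mul_inv_rev]

private lemma count_map_conj (g : W) (l : List W) (t : W) :
    (l.map (fun u => g⁻¹ * u * g)).count t = l.count (g * t * g⁻¹) := by
  induction l with
  | nil => simp
  | cons u l ih =>
    rw [List.map_cons, List.count_cons, List.count_cons, ih]
    congr 1
    have hiff : (g⁻¹ * u * g = t) ↔ (u = g * t * g⁻¹) := by
      rw [show g⁻¹ * u * g = g⁻¹ * u * (g⁻¹)⁻¹ by rw [inv_inv], conj_iff g⁻¹ u t, inv_inv]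
    by_cases h : u = g * t * g⁻¹
    · rw [if_pos (by simp [hiff.mpr h]), if_pos (by simp [h])]
    · have h1 : ¬ (g⁻¹ * u * g = t) := fun hc => h (hiff.mp hc)
      rw [if_neg (by simpa using h1), if_neg (by simpa using h)]

/-- Key multiplicativity: multiplying by a reflection flips its sign. -/
lemma csign_mul_self (w t : W) (ht : cs.IsReflection t) :
    csign cs (w * t) t = - csign cs w t := by
  obtain ⟨p, k, htp⟩ := ht
  obtain ⟨ω, _, hω⟩ := cs.exists_reduced_word' w
  obtain ⟨ρ, _, hρ⟩ := cs.exists_reduced_word' p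
  have hπρrev : π (ρ.reverse) = p⁻¹ := by rw [cs.wordProd_reverse, ← hρ]
  have hw1 : π ((ω ++ ρ) ++ ρ.reverse) = w := by
    rw [cs.wordProd_append, cs.wordProd_append, hπρrev, ← hω, ← hρ]
    group
  have hw2 : π ((ω ++ ρ ++ [k]) ++ ρ.reverse) = w * t := by
    rw [cs.wordProd_append, cs.wordProd_append, cs.wordProd_append, hπρrev, ← hω, ← hρ, htp]
    have : π [k] = s k := cs.wordProd_singleton k
    rw [this]
    group
  have hconj : p⁻¹ * t * (p⁻¹)⁻¹ = s k := by rw [htp]; group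
  have key1 : csign cs w t = (-1 : ℤˣ) ^
      ((cs.rightInvSeq (ω ++ ρ)).count (s k) + (cs.rightInvSeq ρ.reverse).count t) := by
    rw [csign_eq cs _ t hw1, rightInvSeq_append cs (ω ++ ρ) ρ.reverse, List.count_append,
      hπρrev, count_map_conj p⁻¹, hconj]
  have key2 : csign cs (w * t) t = (-1 : ℤˣ) ^
      ((cs.rightInvSeq (ω ++ ρ)).count (s k) + 1 + (cs.rightInvSeq ρ.reverse).count t) := by
    rw [csign_eq cs _ t hw2, rightInvSeq_append cs (ω ++ ρ ++ [k]) ρ.reverse, List.count_append,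
      hπρrev, count_map_conj p⁻¹, hconj]
    congr 2
    rw [rightInvSeq_append cs (ω ++ ρ) [k], List.count_append, count_map_conj (π [k])]
    have h1 : π [k] * s k * (π [k])⁻¹ = s k := by
      rw [cs.wordProd_singleton, cs.inv_simple, mul_assoc, cs.simple_mul_simple_self, mul_one]
    rw [h1]
    congr 1
    rw [cs.rightInvSeq_singleton]
    simp
  rw [key1, key2]
  rw [show (cs.rightInvSeq (ω ++ ρ)).count (s k) + 1 + (cs.rightInvSeq ρ.reverse).count t
    = ((cs.rightInvSeq (ω ++ ρ)).count (s k) + (cs.rightInvSeq ρ.reverse).count t) + 1 by ring]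
  rw [pow_succ, mul_neg_one]

lemma csign_one (t : W) : csign cs 1 t = 1 := by
  have : csign cs 1 t = (-1 : ℤˣ) ^ ((cs.rightInvSeq ([] : List B)).count t) :=
    csign_eq cs [] t (cs.wordProd_nil)
  simpa using this

/-- If `t` is not a right inversion of `w`, its sign is `+1`. -/
lemma csign_of_not_inversion : ∀ n (w t : W), cs.IsReflection t → ℓ w = n →
    ℓ w < ℓ (w * t) → csign cs w t = 1 := by
  intro n
  induction n using Nat.strong_induction_on with
  | _ n IH =>
    intro w t ht hn hlt
    rcases eq_or_ne w 1 with rfl | hw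
    · exact csign_one cs t
    · obtain ⟨j, hj⟩ := cs.exists_leftDescent_of_ne_one hw
      obtain ⟨w'', hw''⟩ : ∃ x, x = s j * w := ⟨_, rfl⟩
      have hjj : ℓ w'' < ℓ w := by rw [hw'']; exact hj
      have hrw : s j * w'' = w := by rw [hw'', ← mul_assoc, cs.simple_mul_simple_self, one_mul]
      obtain ⟨ω'', _, hω''⟩ := cs.exists_reduced_word' w''
      have hword : π (j :: ω'') = w := by rw [cs.wordProd_cons, ← hω'', hrw]
      have hris : cs.rightInvSeq (j :: ω'') = ((π ω'')⁻¹ * s j * π ω'') :: cs.rightInvSeq ω'' :=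
        rfl
      by_cases hcase : t = w''⁻¹ * s j * w''
      · exfalso
        have hwt : w * t = w'' := by
          rw [← hrw, hcase]
          have : s j * w'' * (w''⁻¹ * s j * w'') = (s j * s j) * w'' := by group
          rw [this, cs.simple_mul_simple_self, one_mul]
        rw [hwt] at hlt
        omega
      · have hco : csign cs w t = csign cs w'' t := by
          rw [csign_eq cs _ t hword, csign_eq cs ω'' t hω''.symm, hris, List.count_cons]
          have hb : ((π ω'')⁻¹ * s j * π ω'' == t) = false := by
            rw [← hω'', beq_eq_false_iff_ne]
            exact fun hc => hcase hc.symm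
          rw [hb]
          simp
        have hlt'' : ℓ w'' < ℓ (w'' * t) := by
          rcases Nat.lt_or_ge (ℓ (w'' * t)) (ℓ w'') with h | h
          · exfalso
            have hb : ℓ (w * t) ≤ ℓ (w'' * t) + 1 := by
              rw [← hrw, mul_assoc]
              rcases cs.length_simple_mul (w'' * t) j with h' | h' <;> omega
            omega
          · rcases Nat.eq_or_lt_of_le h with h' | h'
            · exact absurd h'.symm (ht.length_mul_left_ne w'')
            · exact h'
        rw [hco]
        exact IH (ℓ w'') (by omega) w'' t ht rfl hlt''

lemma isRightInversion_iff_csign (w t : W) (ht : cs.IsReflection t) :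
    cs.IsRightInversion w t ↔ csign cs w t = -1 := by
  have hne : ℓ (w * t) ≠ ℓ w := ht.length_mul_left_ne w
  rcases Nat.lt_or_ge (ℓ (w * t)) (ℓ w) with h | h
  · constructor
    · intro _
      have h1 : csign cs (w * t) t = 1 := by
        apply csign_of_not_inversion cs (ℓ (w * t)) (w * t) t ht rfl
        rw [mul_assoc, ht.mul_self, mul_one]
        exact h
      have := csign_mul_self cs (w * t) t ht
      rw [mul_assoc, ht.mul_self, mul_one] at this
      rw [this, h1]
    · intro _
      exact ⟨ht, h⟩
  · have hlt : ℓ w < ℓ (w * t) := by omega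
    have h1 : csign cs w t = 1 := csign_of_not_inversion cs (ℓ w) w t ht rfl hlt
    constructor
    · intro hinv
      exact absurd hinv.2 (by omega)
    · intro hc
      rw [h1] at hc
      exact absurd hc (by decide)

lemma mem_rightInvSeq_of_isRightInversion (ω : List B) (t : W)
    (h : cs.IsRightInversion (π ω) t) : t ∈ cs.rightInvSeq ω := by
  have hs := (isRightInversion_iff_csign cs (π ω) t h.1).mp h
  rw [csign_eq cs ω t rfl] at hs
  by_contra hmem
  have : (cs.rightInvSeq ω).count t = 0 := by
    rw [List.count_eq_zero]
    exact hmem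
  rw [this, pow_zero] at hs
  exact absurd hs (by decide)

/-- Strong exchange property, right version. -/
theorem strong_exchange_right (ω : List B) (t : W) (h : cs.IsRightInversion (π ω) t) :
    ∃ j, j < ω.length ∧ π (ω.eraseIdx j) = π ω * t := by
  have hmem := mem_rightInvSeq_of_isRightInversion cs ω t h
  obtain ⟨j, hj, hget⟩ := List.getElem_of_mem hmem
  have hjl : j < ω.length := by
    have := cs.length_rightInvSeq ω
    omega
  refine ⟨j, hjl, ?_⟩
  have hgetD : (cs.rightInvSeq ω).getD j 1 = t := by
    rw [List.getD_eq_getElem _ _ hj, hget]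
  rw [← hgetD]
  exact (cs.wordProd_mul_getD_rightInvSeq ω j).symm

/-- Strong exchange property, left version. -/
theorem strong_exchange_left (ω : List B) (t : W) (h : cs.IsLeftInversion (π ω) t) :
    ∃ j, j < ω.length ∧ π (ω.eraseIdx j) = t * π ω := by
  have hinv : cs.IsRightInversion (π ω.reverse) t := by
    rw [cs.wordProd_reverse]
    exact cs.isRightInversion_inv_iff.mpr h
  have hmem := mem_rightInvSeq_of_isRightInversion cs ω.reverse t hinv
  rw [cs.rightInvSeq_reverse, List.mem_reverse] at hmem
  obtain ⟨j, hj, hget⟩ := List.getElem_of_mem hmem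
  have hjl : j < ω.length := by
    have := cs.length_leftInvSeq ω
    omega
  refine ⟨j, hjl, ?_⟩
  have hgetD : (cs.leftInvSeq ω).getD j 1 = t := by
    rw [List.getD_eq_getElem _ _ hj, hget]
  rw [← hgetD]
  exact (cs.getD_leftInvSeq_mul_wordProd ω j).symm



/-- Deletion property: every word has a reduced sublist with the same product. -/
theorem exists_reduced_sublist (ω : List B) :
    ∃ ω', ω'.Sublist ω ∧ cs.IsReduced ω' ∧ π ω' = π ω := by
  induction ω with
  | nil =>
    refine ⟨[], List.Sublist.refl _, ?_, rfl⟩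
    show ℓ (π ([] : List B)) = _
    simp [cs.wordProd_nil]
  | cons i ω₁ ih =>
    obtain ⟨r, hsub, hred, hprod⟩ := ih
    rcases cs.length_simple_mul (π r) i with h | h
    · refine ⟨i :: r, hsub.cons₂ i, ?_, ?_⟩
      · show ℓ (π (i :: r)) = _
        rw [cs.wordProd_cons, h, hred]
        simp
      · rw [cs.wordProd_cons, cs.wordProd_cons, hprod]
    · have hinv : cs.IsLeftInversion (π r) (s i) := ⟨cs.isReflection_simple i, by omega⟩
      obtain ⟨j, hj, hprod'⟩ := strong_exchange_left cs r (s i) hinv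
      refine ⟨r.eraseIdx j, ((r.eraseIdx_sublist j).trans hsub).cons i, ?_, ?_⟩
      · show ℓ (π (r.eraseIdx j)) = _
        rw [hprod']
        have h1 := List.length_eraseIdx_add_one hj
        have h2 : ℓ (π r) = r.length := hred
        omega
      · rw [hprod', cs.wordProd_cons, hprod]

/-- A single Bruhat step: multiplication by a reflection which increases length. -/
def bstep (x y : W) : Prop := (∃ t, cs.IsReflection t ∧ y = x * t) ∧ ℓ x < ℓ y

/-- Chain version of Bruhat order. -/
def chLe : W → W → Prop := Relation.ReflTransGen (bstep cs)

lemma chLe_up {w : W} {i : B} (h : ℓ w < ℓ (w * s i)) : chLe cs w (w * s i) :=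
  Relation.ReflTransGen.single ⟨⟨s i, cs.isReflection_simple i, rfl⟩, h⟩

lemma chLe_down {w : W} {i : B} (h : ℓ (w * s i) < ℓ w) : chLe cs (w * s i) w :=
  Relation.ReflTransGen.single ⟨⟨s i, cs.isReflection_simple i, by
    rw [mul_assoc, cs.simple_mul_simple_self, mul_one]⟩, h⟩

lemma bstep_lift {x v : W} {i : B} (hstep : bstep cs x v)
    (hvs : ℓ v < ℓ (v * s i)) : bstep cs (x * s i) (v * s i) := by
  obtain ⟨⟨t, ht, rfl⟩, hlen⟩ := hstep
  constructor
  · refine ⟨s i * t * s i, ?_, ?_⟩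
    · have := ht.conj (s i)
      rwa [cs.inv_simple] at this
    · rw [show x * s i * (s i * t * s i) = x * (s i * s i) * t * s i by group,
        cs.simple_mul_simple_self, mul_one]
  · have h1 : ℓ (x * s i) ≤ ℓ x + 1 := by
      rcases cs.length_mul_simple x i with h' | h' <;> omega
    omega

/-- The key lemma requiring strong exchange. -/
lemma LL2 {x' x : W} {i : B} (hstep : bstep cs x' x)
    (hx's : ℓ x' < ℓ (x' * s i)) (hxs : ℓ (x * s i) < ℓ x) : chLe cs (x' * s i) x := by
  obtain ⟨⟨t, ht, hxt⟩, hlen⟩ := hstep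
  obtain ⟨m, hm, hmp⟩ := cs.exists_reduced_word' (x * s i)
  -- m ++ [i] is a reduced word for x
  have hlen' : ℓ x = ℓ (x * s i) + 1 := by
    rcases cs.length_mul_simple x i with h' | h' <;> omega
  have hπ : π (m ++ [i]) = x := by
    rw [cs.wordProd_append, ← hmp, cs.wordProd_singleton, mul_assoc,
      cs.simple_mul_simple_self, mul_one]
  have hred : cs.IsReduced (m ++ [i]) := by
    show ℓ (π (m ++ [i])) = _
    rw [hπ, List.length_append, List.length_singleton, ← hm, ← hmp]
    omega
  have hinv : cs.IsRightInversion x t := by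
    refine ⟨ht, ?_⟩
    rw [hxt, mul_assoc, ht.mul_self, mul_one]
    rw [hxt] at hlen
    exact hlen
  rw [← hπ] at hinv
  obtain ⟨j, hj, hexc⟩ := strong_exchange_right cs (m ++ [i]) t hinv
  rw [hπ] at hexc
  have hxt' : x * t = x' := by
    rw [hxt, mul_assoc, ht.mul_self, mul_one]
  rw [hxt'] at hexc
  rcases Nat.lt_or_ge j m.length with hjm | hjm
  · -- x' = z * s i with z = π (m.eraseIdx j)
    rw [List.eraseIdx_append_of_lt_length hjm, cs.wordProd_append,
      cs.wordProd_singleton] at hexc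
    have hz : x' * s i = π (m.eraseIdx j) := by
      rw [← hexc, mul_assoc, cs.simple_mul_simple_self, mul_one]
    have hzlen : ℓ (π (m.eraseIdx j)) < ℓ (x * s i) := by
      have h1 := cs.length_wordProd_le (m.eraseIdx j)
      have h2 := List.length_eraseIdx_add_one hjm
      have h3 : ℓ (π m) = m.length := hm
      rw [← hmp] at h3
      omega
    -- chain : x' * s i = z → (x * s i) → x
    have hstep1 : bstep cs (π (m.eraseIdx j)) (x * s i) := by
      constructor
      · have hmem : (cs.rightInvSeq m).getD j 1 ∈ cs.rightInvSeq m := by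
          rw [List.getD_eq_getElem _ _ (by rw [cs.length_rightInvSeq]; exact hjm)]
          exact List.getElem_mem _
        refine ⟨(cs.rightInvSeq m).getD j 1, cs.isReflection_of_mem_rightInvSeq m hmem, ?_⟩
        rw [hmp, ← cs.wordProd_mul_getD_rightInvSeq m j, mul_assoc,
          cs.getD_rightInvSeq_mul_self, mul_one]
      · exact hzlen
    have hstep2 : bstep cs (x * s i) x := by
      refine ⟨⟨s i, cs.isReflection_simple i, ?_⟩, hxs⟩
      rw [mul_assoc, cs.simple_mul_simple_self, mul_one]
    rw [hz]
    exact (Relation.ReflTransGen.single hstep1).tail hstep2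
  · -- j = m.length : x' = π m = x * s i, so x' * s i = x
    have hje : j = m.length := by
      have h1 : (m ++ [i]).length = m.length + 1 := by simp
      omega
    rw [hje, List.eraseIdx_append_of_length_le (le_refl _), Nat.sub_self,
      List.eraseIdx_zero, List.tail_cons, List.append_nil] at hexc
    have hfin : x' * s i = x := by
      rw [← hexc, ← hmp, mul_assoc, cs.simple_mul_simple_self, mul_one]
    rw [hfin]
    exact Relation.ReflTransGen.refl

/-- Lifting property of the chain order. -/
lemma chain_lift (i : B) {u x : W} (h : chLe cs u x) :
    (ℓ x < ℓ (x * s i) → chLe cs (u * s i) (x * s i)) ∧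
    (ℓ (x * s i) < ℓ x → ℓ u < ℓ (u * s i) → chLe cs (u * s i) x) := by
  induction h with
  | refl =>
    constructor
    · intro _; exact Relation.ReflTransGen.refl
    · intro h1 h2; omega
  | @tail y x hyu hstep ih =>
    have hyne := cs.length_mul_simple_ne y i
    have hune := cs.length_mul_simple_ne u i
    constructor
    · intro hx
      rcases Nat.lt_or_ge (ℓ y) (ℓ (y * s i)) with hy | hy
      · exact (ih.1 hy).tail (bstep_lift cs hstep hx)
      · have hy' : ℓ (y * s i) < ℓ y := by omega
        rcases Nat.lt_or_ge (ℓ u) (ℓ (u * s i)) with hu | hu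
        · exact ((ih.2 hy' hu).tail hstep).tail ⟨⟨s i, cs.isReflection_simple i, rfl⟩, hx⟩
        · have hu' : ℓ (u * s i) < ℓ u := by omega
          exact (((chLe_down cs hu').trans hyu).tail hstep).tail
            ⟨⟨s i, cs.isReflection_simple i, rfl⟩, hx⟩
    · intro hx hu
      rcases Nat.lt_or_ge (ℓ y) (ℓ (y * s i)) with hy | hy
      · exact (ih.1 hy).trans (LL2 cs hstep hy hx)
      · have hy' : ℓ (y * s i) < ℓ y := by omega
        exact (ih.2 hy' hu).tail hstep

/-- A sublist of a reduced word is below it in the chain order. -/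
lemma chLe_of_sublist : ∀ (l l' : List B), cs.IsReduced l → l'.Sublist l →
    chLe cs (π l') (π l) := by
  intro l
  induction l using List.reverseRecOn with
  | nil =>
    intro l' _ hsub
    rw [List.sublist_nil.mp hsub]
    exact Relation.ReflTransGen.refl
  | append_singleton l₀ i ih =>
    intro l' hred hsub
    have hred₀ : cs.IsReduced l₀ := by
      have := hred.take l₀.length
      rwa [List.take_left] at this
    have hlt : ℓ (π l₀) < ℓ (π l₀ * s i) := by
      have h1 : ℓ (π (l₀ ++ [i])) = l₀.length + 1 := by
        rw [hred]; simp
      rw [cs.wordProd_append, cs.wordProd_singleton] at h1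
      have h2 : ℓ (π l₀) = l₀.length := hred₀
      omega
    rw [List.sublist_append_iff] at hsub
    obtain ⟨r₁, r₂, rfl, h₁, h₂⟩ := hsub
    rcases List.sublist_singleton.mp h₂ with rfl | rfl
    · rw [List.append_nil, cs.wordProd_append, cs.wordProd_singleton]
      exact (ih r₁ hred₀ h₁).tail ⟨⟨s i, cs.isReflection_simple i, rfl⟩, hlt⟩
    · rw [cs.wordProd_append, cs.wordProd_singleton,
        cs.wordProd_append, cs.wordProd_singleton]
      exact (chain_lift cs i (ih r₁ hred₀ h₁)).1 hlt

/-- The strong subword relation. -/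
def good (u v : W) : Prop :=
  ∀ ω, cs.IsReduced ω → π ω = v →
    ∃ ω', ω'.Sublist ω ∧ cs.IsReduced ω' ∧ π ω' = u

lemma good_refl (u : W) : good cs u u := fun ω h hp => ⟨ω, List.Sublist.refl _, h, hp⟩

lemma good_trans {u x v : W} (h1 : good cs u x) (h2 : good cs x v) : good cs u v := by
  intro ω hred hp
  obtain ⟨σ, hs, hsr, hsp⟩ := h2 ω hred hp
  obtain ⟨τ, ht, htr, htp⟩ := h1 σ hsr hsp
  exact ⟨τ, ht.trans hs, htr, htp⟩

lemma good_of_bstep {x v : W} (h : bstep cs x v) : good cs x v := by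
  obtain ⟨⟨t, ht, hxt⟩, hlen⟩ := h
  intro ω hred hp
  have hinv : cs.IsRightInversion (π ω) t := by
    refine ⟨ht, ?_⟩
    rw [hp, hxt, mul_assoc, ht.mul_self, mul_one, ← hxt]
    exact hlen
  obtain ⟨j, hj, hexc⟩ := strong_exchange_right cs ω t hinv
  obtain ⟨σ, hs, hsr, hsp⟩ := exists_reduced_sublist cs (ω.eraseIdx j)
  refine ⟨σ, hs.trans (ω.eraseIdx_sublist j), hsr, ?_⟩
  rw [hsp, hexc, hp, hxt, mul_assoc, ht.mul_self, mul_one]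

lemma good_of_chLe {u v : W} (h : chLe cs u v) : good cs u v := by
  induction h with
  | refl => exact good_refl cs u
  | tail _ hstep ih => exact good_trans cs ih (good_of_bstep cs hstep)


lemma good_of_leB {u v : W} (h : leB cs u v) : good cs u v := by
  obtain ⟨l, hred, hπ, l', hsub, hπ'⟩ := h
  have hc := chLe_of_sublist cs l l' hred hsub
  rw [hπ, hπ'] at hc
  exact good_of_chLe cs hc

lemma leB_of_good {u v : W} (h : good cs u v) : leB cs u v := by
  obtain ⟨ω, hred, hπ⟩ := cs.exists_reduced_word' v
  obtain ⟨ω', hsub, _, hπ'⟩ := h ω hred hπ.symm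
  exact ⟨ω, hred, hπ.symm, ω', hsub, hπ'⟩

lemma descent_length {v : W} {i : B} (hv : cs.IsRightDescent v i) :
    ℓ v = ℓ (v * s i) + 1 := by
  have h1 : ℓ (v * s i) < ℓ v := hv
  rcases cs.length_mul_simple v i with h | h <;> omega

lemma not_descent_length {v : W} {i : B} (hv : ¬ cs.IsRightDescent v i) :
    ℓ (v * s i) = ℓ v + 1 := by
  have h1 : ¬ (ℓ (v * s i) < ℓ v) := hv
  rcases cs.length_mul_simple v i with h | h <;> omega

lemma concat_word {v : W} {i : B} (hv : cs.IsRightDescent v i) {m : List B}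
    (hm : cs.IsReduced m) (hmp : v * s i = π m) :
    cs.IsReduced (m ++ [i]) ∧ π (m ++ [i]) = v := by
  have hπ : π (m ++ [i]) = v := by
    rw [cs.wordProd_append, ← hmp, cs.wordProd_singleton, mul_assoc,
      cs.simple_mul_simple_self, mul_one]
  refine ⟨?_, hπ⟩
  show ℓ (π (m ++ [i])) = _
  rw [hπ, List.length_append, List.length_singleton]
  have h1 : ℓ (π m) = m.length := hm
  rw [← hmp] at h1
  have h2 := descent_length cs hv
  omega

/-- Key lifting lemma for the antisorting operator. -/
lemma lem1 {u v : W} (i : B) (hg : good cs u v) (hv : cs.IsRightDescent v i)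
    (hu : ¬ cs.IsRightDescent u i) : leB cs (u * s i) v := by
  obtain ⟨m, hm, hmp⟩ := cs.exists_reduced_word' (v * s i)
  obtain ⟨hred, hπ⟩ := concat_word cs hv hm hmp
  obtain ⟨l', hsub, hlred, hlp⟩ := hg (m ++ [i]) hred hπ
  rw [List.sublist_append_iff] at hsub
  obtain ⟨r₁, r₂, rfl, h₁, h₂⟩ := hsub
  rcases List.sublist_singleton.mp h₂ with rfl | rfl
  · refine ⟨m ++ [i], hred, hπ, r₁ ++ [i], h₁.append_right [i], ?_⟩
    rw [List.append_nil] at hlp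
    rw [cs.wordProd_append, cs.wordProd_singleton, hlp]
  · refine ⟨m ++ [i], hred, hπ, r₁, h₁.trans (List.sublist_append_left m [i]), ?_⟩
    have hr : π r₁ * s i = u := by
      rw [← cs.wordProd_singleton i, ← cs.wordProd_append]
      exact hlp
    rw [← hr, mul_assoc, cs.simple_mul_simple_self, mul_one]

/-- The antisorting operator preserves Bruhat order. -/
theorem piOp_mono (i : B) {u v : W} (h : leB cs u v) :
    leB cs (piOp cs i u) (piOp cs i v) := by
  have hg := good_of_leB cs h
  by_cases hv : cs.IsRightDescent v i <;> by_cases hu : cs.IsRightDescent u i <;>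
    simp only [piOp, if_pos, if_neg, hv, hu, if_true, if_false]
  · exact h
  · exact lem1 cs i hg hv hu
  · apply leB_of_good
    refine good_trans cs hg (good_of_bstep cs ⟨⟨s i, cs.isReflection_simple i, rfl⟩, ?_⟩)
    have := not_descent_length cs hv
    omega
  · have hg2 : good cs u (v * s i) := by
      refine good_trans cs hg (good_of_bstep cs ⟨⟨s i, cs.isReflection_simple i, rfl⟩, ?_⟩)
      have := not_descent_length cs hv
      omega
    have hv2 : cs.IsRightDescent (v * s i) i := by
      show ℓ (v * s i * s i) < ℓ (v * s i)
      rw [mul_assoc, cs.simple_mul_simple_self, mul_one]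
      have := not_descent_length cs hv
      omega
    exact lem1 cs i hg2 hv2 hu

/-- The sorting operator preserves Bruhat order. -/
theorem pibOp_mono (i : B) {u v : W} (h : leB cs u v) :
    leB cs (pibOp cs i u) (pibOp cs i v) := by
  have hg := good_of_leB cs h
  by_cases hv : cs.IsRightDescent v i
  · obtain ⟨m, hm, hmp⟩ := cs.exists_reduced_word' (v * s i)
    obtain ⟨hred, hπ⟩ := concat_word cs hv hm hmp
    obtain ⟨l', hsub, hlred, hlp⟩ := hg (m ++ [i]) hred hπ
    rw [List.sublist_append_iff] at hsub
    obtain ⟨r₁, r₂, rfl, h₁, h₂⟩ := hsub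
    rcases List.sublist_singleton.mp h₂ with rfl | rfl
    · rw [List.append_nil] at hlp hlred
      have huv : leB cs u (v * s i) := ⟨m, hm, hmp.symm, r₁, h₁, hlp⟩
      by_cases hu : cs.IsRightDescent u i <;>
        simp only [pibOp, if_pos, if_neg, hv, hu, if_true, if_false]
      · apply leB_of_good
        refine good_trans cs (good_of_bstep cs ⟨⟨s i, cs.isReflection_simple i, ?_⟩, hu⟩)
          (good_of_leB cs huv)
        rw [mul_assoc, cs.simple_mul_simple_self, mul_one]
      · exact huv
    · have hr : π r₁ * s i = u := by
        rw [← cs.wordProd_singleton i, ← cs.wordProd_append]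
        exact hlp
      have hrπ : π r₁ = u * s i := by
        rw [← hr, mul_assoc, cs.simple_mul_simple_self, mul_one]
      have hu : cs.IsRightDescent u i := by
        show ℓ (u * s i) < ℓ u
        have h1 : ℓ u = r₁.length + 1 := by
          have h3 : ℓ (π (r₁ ++ [i])) = (r₁ ++ [i]).length := hlred
          rw [hlp] at h3
          simpa using h3
        have h2 : ℓ (u * s i) ≤ r₁.length := by
          rw [← hrπ]
          exact cs.length_wordProd_le r₁
        omega
      simp only [pibOp, if_pos, if_neg, hv, hu, if_true, if_false]
      exact ⟨m, hm, hmp.symm, r₁, h₁, hrπ⟩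
  · by_cases hu : cs.IsRightDescent u i <;>
      simp only [pibOp, if_pos, if_neg, hv, hu, if_true, if_false]
    · apply leB_of_good
      refine good_trans cs (good_of_bstep cs ⟨⟨s i, cs.isReflection_simple i, ?_⟩, hu⟩) hg
      rw [mul_assoc, cs.simple_mul_simple_self, mul_one]
    · exact h


end BHAux

/-- Every element of the biHecke monoid preserves Bruhat order. -/
theorem biHecke_preserves_bruhatOrder {B W : Type*} [Group W] [Finite W] {M : CoxeterMatrix B}
    (cs : CoxeterSystem M W) (f : Function.End W) (hf : f ∈ biHecke cs)
    (u v : W) (huv : leB cs u v) : leB cs (f u) (f v) := by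
  have main : ∀ u v : W, leB cs u v → leB cs (f u) (f v) := by
    induction hf using Submonoid.closure_induction with
    | mem g hg =>
      rcases hg with ⟨i, rfl⟩ | ⟨i, rfl⟩
      · exact fun u v huv => BHAux.piOp_mono cs i huv
      · exact fun u v huv => BHAux.pibOp_mono cs i huv
    | one => exact fun u v huv => huv
    | mul g h _ _ ihg ihh => exact fun u v huv => ihg _ _ (ihh _ _ huv)
  exact main u v huv
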